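/- (Proposition: case φ → +∞ with negative limiting potential.) Assume 0 < γ ≤ 2. Let (φ, y, ρ, H) be a right-maximal solution of the flat FLRW system on I = [t₀, T) satisfying the Friedmann constraint at every t ∈ I, with ρ(t₀) ≥ 0. Suppose φ(t) → +∞ as t → T⁻ and limsup_{ψ→+∞} V(ψ) < 0 (which holds in particular if V(ψ) → V_∞ with V_∞ < 0 or V_∞ = −∞ as ψ → +∞). Then T < ∞ and H(t) → −∞ as t → T⁻. -/

import Mathlib

open Real Set Filter
open scoped Topology

/-- A solution of the flat FLRW system on the set `I`:
`φ' = y`, `y' = -3Hy - V'(φ) + α(φ)ρ`, `ρ' = -ρ(3γH + α(φ)y)`, `H' = -(1/2)(y² + γρ)`. -/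
def IsFLRWSolution (γ : ℝ) (α V : ℝ → ℝ) (I : Set ℝ) (φ y ρ H : ℝ → ℝ) : Prop :=
  ∀ t ∈ I,
    HasDerivWithinAt φ (y t) I t ∧
    HasDerivWithinAt y (-3 * H t * y t - deriv V (φ t) + α (φ t) * ρ t) I t ∧
    HasDerivWithinAt ρ (-(ρ t) * (3 * γ * H t + α (φ t) * y t)) I t ∧
    HasDerivWithinAt H (-(1/2) * (y t ^ 2 + γ * ρ t)) I t

/-- The Friedmann constraint `3H² = (1/2)y² + V(φ) + ρ` at time `t`. -/
def FriedmannConstraint (V : ℝ → ℝ) (φ y ρ H : ℝ → ℝ) (t : ℝ) : Prop :=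
  3 * H t ^ 2 = (1/2) * y t ^ 2 + V (φ t) + ρ t

/-- The interval `[t₀, T)` with possibly infinite right endpoint `T : EReal`. -/
def IcoE (t₀ : ℝ) (T : EReal) : Set ℝ := {t : ℝ | t₀ ≤ t ∧ (t : EReal) < T}

/-- The filter of real times `t → T⁻` (this is `𝓝[<] T` for finite `T`, and `atTop`
for `T = ⊤`). -/
noncomputable def leftLimFilter (T : EReal) : Filter ℝ :=
  Filter.comap (fun t : ℝ => (t : EReal)) (nhdsWithin T (Set.Iio T))

/-- The solution `(φ, y, ρ, H)` on `[t₀, T)` extends to a solution of the same system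
on the set `J`. -/
def ExtendsSol (γ : ℝ) (α V : ℝ → ℝ) (t₀ : ℝ) (T : EReal)
    (φ y ρ H : ℝ → ℝ) (J : Set ℝ) : Prop :=
  ∃ φ' y' ρ' H' : ℝ → ℝ,
    IsFLRWSolution γ α V J φ' y' ρ' H' ∧
    Set.EqOn φ φ' (IcoE t₀ T) ∧ Set.EqOn y y' (IcoE t₀ T) ∧
    Set.EqOn ρ ρ' (IcoE t₀ T) ∧ Set.EqOn H H' (IcoE t₀ T)

/-- A solution on `[t₀, T)` is right-maximal if it can be extended neither to a solution
on `[t₀, T]` (when `T` is finite) nor to a solution on `[t₀, T')` for some `T' > T`. -/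
def RightMaximal (γ : ℝ) (α V : ℝ → ℝ) (t₀ : ℝ) (T : EReal)
    (φ y ρ H : ℝ → ℝ) : Prop :=
  ¬ ((T ≠ ⊤ ∧ ExtendsSol γ α V t₀ T φ y ρ H (Set.Icc t₀ T.toReal)) ∨
     (∃ T' : EReal, T < T' ∧ ExtendsSol γ α V t₀ T φ y ρ H (IcoE t₀ T')))

/-! ### Auxiliary lemmas -/

lemma IcoE_Icc_subset {t₀ a b : ℝ} {T : EReal} (ha : t₀ ≤ a) (hb : (b : EReal) < T) :
    Icc a b ⊆ IcoE t₀ T := fun s hs =>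
  ⟨ha.trans hs.1, lt_of_le_of_lt (EReal.coe_le_coe_iff.2 hs.2) hb⟩

lemma IcoE_mem_nhds {t₀ b t : ℝ} {T : EReal} (h1 : t₀ < t) (h2 : t < b) (hb : (b : EReal) < T) :
    IcoE t₀ T ∈ 𝓝 t :=
  Filter.mem_of_superset (Ioo_mem_nhds h1 h2) fun s hs =>
    ⟨hs.1.le, lt_of_lt_of_le (EReal.coe_lt_coe_iff.2 hs.2) hb.le⟩

/-- A mean-value style helper: if `f` has nonpositive derivative (within `S`) on `[a,b] ⊆ S`
and `S` is a neighborhood of every interior point, then `f b ≤ f a`. -/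
lemma decr_helper {S : Set ℝ} {f f' : ℝ → ℝ} {a b : ℝ} (hab : a ≤ b)
    (hsub : Icc a b ⊆ S) (hnb : ∀ t ∈ Ioo a b, S ∈ 𝓝 t)
    (hd : ∀ t ∈ Icc a b, HasDerivWithinAt f (f' t) S t)
    (hf' : ∀ t ∈ Ioo a b, f' t ≤ 0) : f b ≤ f a := by
  have hder : ∀ t ∈ Ioo a b, HasDerivAt f (f' t) t := fun t ht =>
    (hd t (Ioo_subset_Icc_self ht)).hasDerivAt (hnb t ht)
  have hcont : ContinuousOn f (Icc a b) := fun t ht =>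
    ((hd t ht).continuousWithinAt).mono hsub
  have h2 := antitoneOn_of_deriv_nonpos (convex_Icc a b) hcont
    (by rw [interior_Icc]
        exact fun t ht => ((hder t ht).differentiableAt).differentiableWithinAt)
    (by rw [interior_Icc]
        intro t ht
        rw [(hder t ht).deriv]
        exact hf' t ht)
  exact h2 (left_mem_Icc.2 hab) (right_mem_Icc.2 hab) hab

lemma leftLimFilter_coe (x : ℝ) : leftLimFilter (x : EReal) = 𝓝[<] x := by
  have hpre : (fun t : ℝ => (t : EReal)) ⁻¹' (Iio (x : EReal)) = Iio x := by
    ext t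
    simp [EReal.coe_lt_coe_iff]
  unfold leftLimFilter
  rw [nhdsWithin, comap_inf, comap_principal, hpre, EReal.nhds_coe,
    comap_map EReal.coe_injective, nhdsWithin]

lemma leftLimFilter_top : leftLimFilter (⊤ : EReal) = atTop := by
  have hIio : Iio (⊤ : EReal) = {(⊤ : EReal)}ᶜ := by
    ext z
    simp [lt_top_iff_ne_top]
  unfold leftLimFilter
  rw [hIio]
  rw [show nhdsWithin (⊤ : EReal) {(⊤ : EReal)}ᶜ = 𝓝[≠] (⊤ : EReal) from rfl,
    EReal.nhdsWithin_top, comap_map EReal.coe_injective]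

/-- Nonnegativity is preserved by the linear ODE `ρ' = -ρ g`. -/
lemma rho_nonneg_of_ode {t₀ : ℝ} {T : EReal} (hT : (t₀ : EReal) < T) {g ρ : ℝ → ℝ}
    (hg : ContinuousOn g (IcoE t₀ T))
    (hd : ∀ t ∈ IcoE t₀ T, HasDerivWithinAt ρ (-(ρ t) * g t) (IcoE t₀ T) t)
    (hρ₀ : 0 ≤ ρ t₀) : ∀ s ∈ IcoE t₀ T, 0 ≤ ρ s := by
  intro s hs
  by_contra hneg
  push_neg at hneg
  have hsub : Icc t₀ s ⊆ IcoE t₀ T := IcoE_Icc_subset le_rfl hs.2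
  have hcont : ContinuousOn ρ (IcoE t₀ T) := fun t ht => (hd t ht).continuousWithinAt
  have hcontIcc : ContinuousOn ρ (Icc t₀ s) := hcont.mono hsub
  set B : Set ℝ := Icc t₀ s ∩ ρ ⁻¹' Iic 0 with hB
  have hBclosed : IsClosed B := hcontIcc.preimage_isClosed_of_isClosed isClosed_Icc isClosed_Iic
  have hsB : s ∈ B := ⟨⟨hs.1, le_rfl⟩, hneg.le⟩
  have hBne : B.Nonempty := ⟨s, hsB⟩
  have hBbdd : BddBelow B := ⟨t₀, fun t ht => ht.1.1⟩
  have huB : sInf B ∈ B := hBclosed.csInf_mem hBne hBbdd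
  set u := sInf B with hu
  have hu_le : ρ u ≤ 0 := huB.2
  have ht₀u : t₀ ≤ u := huB.1.1
  have hus : u ≤ s := huB.1.2
  have huS : u ∈ IcoE t₀ T := hsub huB.1
  have hu_ge : 0 ≤ ρ u := by
    rcases eq_or_lt_of_le ht₀u with h | h
    · rw [← h]; exact hρ₀
    · have hpos : ∀ t ∈ Ico t₀ u, 0 < ρ t := by
        intro t ht
        by_contra hle
        push_neg at hle
        have htB : t ∈ B := ⟨⟨ht.1, ht.2.le.trans hus⟩, hle⟩
        exact absurd (csInf_le hBbdd htB) (not_le.2 ht.2)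
      have hmem : u ∈ closure (Ico t₀ u) := by
        rw [closure_Ico h.ne]
        exact ⟨ht₀u, le_rfl⟩
      haveI hne : (𝓝[Ico t₀ u] u).NeBot := mem_closure_iff_nhdsWithin_neBot.1 hmem
      have htends : Tendsto ρ (𝓝[Ico t₀ u] u) (𝓝 (ρ u)) :=
        (hcont u huS).mono fun t ht => hsub ⟨ht.1, ht.2.le.trans hus⟩
      exact ge_of_tendsto htends (eventually_nhdsWithin_of_forall fun t ht => (hpos t ht).le)
  have hρu : ρ u = 0 := le_antisymm hu_le hu_ge
  have hsubus : Icc u s ⊆ IcoE t₀ T := IcoE_Icc_subset ht₀u hs.2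
  obtain ⟨K, hK⟩ := (isCompact_Icc : IsCompact (Icc u s)).exists_bound_of_continuousOn
    (hg.mono hsubus)
  have hgron := norm_le_gronwallBound_of_norm_deriv_right_le (f := ρ)
    (f' := fun t => -(ρ t) * g t) (δ := 0) (K := K) (ε := 0) (a := u) (b := s)
    (hcont.mono hsubus)
    (fun x hx => ((hd x (hsubus ⟨hx.1, hx.2.le⟩)).mono hsubus).mono_of_mem_nhdsWithin
      (Icc_mem_nhdsGE_of_mem hx))
    (by rw [hρu]; simp)
    (by
      intro x hx
      rw [add_zero, norm_mul, norm_neg, mul_comm]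
      exact mul_le_mul_of_nonneg_right (hK x ⟨hx.1, hx.2.le⟩) (norm_nonneg _))
  have hfin := hgron s ⟨hus, le_rfl⟩
  rw [gronwallBound_ε0_δ0, Real.norm_eq_abs] at hfin
  have : 0 < |ρ s| := abs_pos.2 (ne_of_lt hneg)
  linarith

/-- if `φ(t) → +∞` as `t → T⁻` along a right-maximal solution and
`limsup_{ψ→+∞} V(ψ) < 0`, then `T < ∞` and `H(t) → -∞` as `t → T⁻`. -/
theorem flrw_recollapse_of_negative_limiting_potential
    (γ : ℝ) (hγ : 0 < γ) (hγ2 : γ ≤ 2)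
    (α V : ℝ → ℝ) (hα : Continuous α) (hV : ContDiff ℝ 2 V)
    (t₀ : ℝ) (T : EReal) (hT : (t₀ : EReal) < T)
    (φ y ρ H : ℝ → ℝ)
    (hsol : IsFLRWSolution γ α V (IcoE t₀ T) φ y ρ H)
    (hmax : RightMaximal γ α V t₀ T φ y ρ H)
    (hcon : ∀ t ∈ IcoE t₀ T, FriedmannConstraint V φ y ρ H t)
    (hρ₀ : 0 ≤ ρ t₀)
    (hφ : Tendsto φ (leftLimFilter T) atTop)
    (hVsup : Filter.limsup (fun ψ => (V ψ : EReal)) atTop < 0) :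
    T < ⊤ ∧ Tendsto H (leftLimFilter T) atBot := by
  -- continuity of the solution components
  have hφc : ContinuousOn φ (IcoE t₀ T) := fun t ht => ((hsol t ht).1).continuousWithinAt
  have hyc : ContinuousOn y (IcoE t₀ T) := fun t ht => ((hsol t ht).2.1).continuousWithinAt
  have hHc : ContinuousOn H (IcoE t₀ T) := fun t ht => ((hsol t ht).2.2.2).continuousWithinAt
  have hgc : ContinuousOn (fun t => 3 * γ * H t + α (φ t) * y t) (IcoE t₀ T) :=
    (continuousOn_const.mul hHc).add ((hα.comp_continuousOn hφc).mul hyc)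
  -- the dust density stays nonnegative
  have hρpos : ∀ t ∈ IcoE t₀ T, 0 ≤ ρ t :=
    rho_nonneg_of_ode hT hgc (fun t ht => (hsol t ht).2.2.1) hρ₀
  -- H is antitone
  have hHanti : ∀ a b : ℝ, a ∈ IcoE t₀ T → b ∈ IcoE t₀ T → a ≤ b → H b ≤ H a := by
    intro a b haS hbS hab
    refine decr_helper (f' := fun t => -(1/2) * (y t ^ 2 + γ * ρ t)) hab
      (IcoE_Icc_subset haS.1 hbS.2)
      (fun t ht => IcoE_mem_nhds (lt_of_le_of_lt haS.1 ht.1) ht.2 hbS.2)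
      (fun t ht => (hsol t (IcoE_Icc_subset haS.1 hbS.2 ht)).2.2.2) ?_
    intro t ht
    have h := hρpos t (IcoE_Icc_subset haS.1 hbS.2 (Ioo_subset_Icc_self ht))
    nlinarith [sq_nonneg (y t)]
  -- choose a strictly negative eventual bound for V
  obtain ⟨r, hr1, hr2⟩ := exists_between hVsup
  lift r to ℝ using ⟨(hr2.trans_le le_top).ne, (bot_le.trans_lt hr1).ne'⟩
  obtain ⟨c, hc, hev⟩ : ∃ c : ℝ, c < 0 ∧ ∀ᶠ ψ in atTop, V ψ < c := by
    refine ⟨r, ?_, ?_⟩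
    · exact_mod_cast hr2
    · exact (eventually_lt_of_limsup_lt hr1).mono fun ψ hψ => by exact_mod_cast hψ
  have hevφ : ∀ᶠ t in leftLimFilter T, V (φ t) < c := hφ.eventually hev
  -- key differential inequality
  have hkey : ∀ t ∈ IcoE t₀ T, V (φ t) < c →
      -(1/2) * (y t ^ 2 + γ * ρ t) ≤ -(γ/2) * (3 * H t ^ 2 - c) := by
    intro t ht hVt
    have hcons := hcon t ht
    have hρt := hρpos t ht
    rw [FriedmannConstraint] at hcons
    nlinarith [mul_nonneg hγ.le (le_of_lt (sub_pos.2 hVt)),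
      mul_nonneg (show (0:ℝ) ≤ 2 - γ by linarith) (sq_nonneg (y t))]
  by_cases hTtop : T = ⊤
  · -- infinite T is impossible: H blows up in finite time
    exfalso
    subst hTtop
    rw [leftLimFilter_top] at hevφ
    obtain ⟨a, ha⟩ := eventually_atTop.1 hevφ
    have hmemS : ∀ t : ℝ, t₀ ≤ t → t ∈ IcoE t₀ (⊤ : EReal) := fun t h =>
      ⟨h, EReal.coe_lt_top t⟩
    set t₁ := max a t₀ with ht₁
    have ht₀t₁ : t₀ ≤ t₁ := le_max_right a t₀
    have hkey' : ∀ t, t₁ ≤ t →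
        -(1/2) * (y t ^ 2 + γ * ρ t) ≤ -(γ/2) * (3 * H t ^ 2 - c) := fun t h =>
      hkey t (hmemS t (ht₀t₁.trans h)) (ha t ((le_max_left a t₀).trans h))
    -- step 1 : linear decrease of H
    have hlin : ∀ t, t₁ ≤ t → H t ≤ H t₁ + γ * c / 2 * (t - t₁) := by
      intro t hto
      have hfb := decr_helper (f := fun s => H s - γ * c / 2 * s)
        (f' := fun s => -(1/2) * (y s ^ 2 + γ * ρ s) - γ * c / 2 * 1) hto
        (IcoE_Icc_subset ht₀t₁ (EReal.coe_lt_top t))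
        (fun s hs => IcoE_mem_nhds (lt_of_le_of_lt ht₀t₁ hs.1) hs.2 (EReal.coe_lt_top t))
        (fun s hs => ((hsol s (hmemS s (ht₀t₁.trans hs.1))).2.2.2).sub
          ((hasDerivWithinAt_id s (IcoE t₀ (⊤ : EReal))).const_mul (γ * c / 2)))
        (by
          intro s hs
          have h1 := hkey' s hs.1.le
          nlinarith [mul_nonneg hγ.le (sq_nonneg (H s))])
      have hfb' : H t - γ * c / 2 * t ≤ H t₁ - γ * c / 2 * t₁ := hfb
      linarith
    -- choose t₂ with H t₂ ≤ -1
    have hγc : γ * c < 0 := mul_neg_of_pos_of_neg hγ hc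
    have hd0 : 0 < -(γ * c) / 2 := by linarith
    set t₂ := t₁ + (|H t₁| + 1) / (-(γ * c) / 2) with ht₂
    have ht₂1 : t₁ ≤ t₂ :=
      le_add_of_nonneg_right (div_nonneg (by positivity) hd0.le)
    have hHt₂ : H t₂ ≤ -1 := by
      have h1 := hlin t₂ ht₂1
      have harith : γ * c / 2 * (t₂ - t₁) = -(|H t₁| + 1) := by
        have hdiff : t₂ - t₁ = (|H t₁| + 1) / (-(γ * c) / 2) := by rw [ht₂]; ring
        rw [hdiff]
        field_simp [ne_of_lt hγc]
        rw [div_self hc.ne]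
      have habs : H t₁ ≤ |H t₁| := le_abs_self _
      linarith
    have hH2 : ∀ t, t₂ ≤ t → H t ≤ -1 := fun t h =>
      le_trans (hHanti t₂ t (hmemS _ (ht₀t₁.trans ht₂1)) (hmemS _ ((ht₀t₁.trans ht₂1).trans h)) h)
        hHt₂
    -- step 2 : Riccati blow-up
    set b := t₂ + 4 / (3 * γ) with hb
    have ht₂b : t₂ ≤ b := le_add_of_nonneg_right (by positivity)
    have ht₀t₂ : t₀ ≤ t₂ := ht₀t₁.trans ht₂1
    have hfb := decr_helper (f := fun s => 3 * γ / 2 * s - (H s)⁻¹)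
      (f' := fun s => 3 * γ / 2 * 1 - -(-(1/2) * (y s ^ 2 + γ * ρ s)) / H s ^ 2) ht₂b
      (IcoE_Icc_subset ht₀t₂ (EReal.coe_lt_top b))
      (fun s hs => IcoE_mem_nhds (lt_of_le_of_lt ht₀t₂ hs.1) hs.2 (EReal.coe_lt_top b))
      (fun s hs =>
        ((hasDerivWithinAt_id s (IcoE t₀ (⊤ : EReal))).const_mul (3 * γ / 2)).sub
          (((hsol s (hmemS s (ht₀t₂.trans hs.1))).2.2.2).inv
            (by have := hH2 s hs.1; intro h0; rw [h0] at this; linarith)))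
      (by
        intro s hs
        have hHs := hH2 s hs.1.le
        have hsq : (1:ℝ) ≤ H s ^ 2 := by nlinarith
        have hH2pos : (0:ℝ) < H s ^ 2 := by linarith
        have h1 := hkey' s (ht₂1.trans hs.1.le)
        rw [sub_nonpos, le_div_iff₀ hH2pos]
        nlinarith)
    have hfb' : 3 * γ / 2 * b - (H b)⁻¹ ≤ 3 * γ / 2 * t₂ - (H t₂)⁻¹ := hfb
    have hHt₂inv : -1 ≤ (H t₂)⁻¹ := by
      have h0 : H t₂ < 0 := lt_of_le_of_lt hHt₂ (by norm_num)
      rw [← one_div, le_div_iff_of_neg h0]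
      linarith
    have hHbinv : (H b)⁻¹ < 0 := inv_lt_zero.2 (lt_of_le_of_lt (hH2 b ht₂b) (by norm_num))
    have h2 : 3 * γ / 2 * (b - t₂) = 2 := by
      have hbt : b - t₂ = 4 / (3 * γ) := by rw [hb]; ring
      rw [hbt]
      field_simp
      ring
    nlinarith
  · -- T is finite
    have hTlt : T < ⊤ := Ne.lt_top hTtop
    have hTbot : T ≠ ⊥ := ((EReal.bot_lt_coe t₀).trans hT).ne'
    refine ⟨hTlt, ?_⟩
    obtain ⟨Tr, rfl⟩ : ∃ Tr : ℝ, (Tr : EReal) = T := ⟨T.toReal, EReal.coe_toReal hTtop hTbot⟩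
    have htr : t₀ < Tr := EReal.coe_lt_coe_iff.1 hT
    rw [leftLimFilter_coe] at hφ
    rw [leftLimFilter_coe]
    -- H is unbounded below on the interval
    have hunb : ∀ L : ℝ, ∃ t, t ∈ IcoE t₀ (Tr : EReal) ∧ H t ≤ L := by
      by_contra hcontra
      push_neg at hcontra
      obtain ⟨L, hL⟩ := hcontra
      have hbound : ∀ t ∈ IcoE t₀ (Tr : EReal), φ t ≤ φ t₀ + H t₀ - L + (Tr - t₀) / 2 := by
        intro t ht
        have hfb := decr_helper (f := fun s => φ s + H s - s / 2)
          (f' := fun s => y s + -(1/2) * (y s ^ 2 + γ * ρ s) - 1 / 2) ht.1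
          (IcoE_Icc_subset le_rfl ht.2)
          (fun s hs => IcoE_mem_nhds hs.1 hs.2 ht.2)
          (fun s hs =>
            (((hsol s (IcoE_Icc_subset le_rfl ht.2 hs)).1.add
              (hsol s (IcoE_Icc_subset le_rfl ht.2 hs)).2.2.2).sub
              ((hasDerivWithinAt_id s (IcoE t₀ (Tr : EReal))).div_const 2)))
          (by
            intro s hs
            have hρs := hρpos s (IcoE_Icc_subset le_rfl ht.2 (Ioo_subset_Icc_self hs))
            nlinarith [sq_nonneg (y s - 1), mul_nonneg hγ.le hρs])
        have hfb' : φ t + H t - t / 2 ≤ φ t₀ + H t₀ - t₀ / 2 := hfb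
        have hHt := hL t ht
        have htT : t < Tr := EReal.coe_lt_coe_iff.1 ht.2
        linarith
      have hev1 : ∀ᶠ t in 𝓝[<] Tr, φ t₀ + H t₀ - L + (Tr - t₀) / 2 < φ t :=
        hφ.eventually (eventually_gt_atTop _)
      have hev2 : ∀ᶠ t in 𝓝[<] Tr, t ∈ IcoE t₀ (Tr : EReal) := by
        filter_upwards [Ioo_mem_nhdsLT_of_mem (⟨htr, le_rfl⟩ : Tr ∈ Ioc t₀ Tr)] with t ht
        exact ⟨ht.1.le, EReal.coe_lt_coe_iff.2 ht.2⟩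
      obtain ⟨t, h1, h2⟩ := (hev1.and hev2).exists
      exact absurd (hbound t h2) (not_le.2 h1)
    rw [tendsto_atBot]
    intro L
    obtain ⟨t', ht'S, ht'⟩ := hunb L
    have ht'T : t' < Tr := EReal.coe_lt_coe_iff.1 ht'S.2
    filter_upwards [Ioo_mem_nhdsLT_of_mem (⟨ht'T, le_rfl⟩ : Tr ∈ Ioc t' Tr)] with t ht
    have htS : t ∈ IcoE t₀ (Tr : EReal) := ⟨ht'S.1.trans ht.1.le, EReal.coe_lt_coe_iff.2 ht.2⟩
    exact le_trans (hHanti t' t ht'S htS ht.1.le) ht'
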